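/- Let G be a Lie group with Lie algebra 𝔤 carrying an Ad-invariant inner product, embedded in GL(n,ℝ). For smooth maps f₁, f₂, f₃ : M → G, the ⟨·,·⟩-valued 2-form cocycle c(f₁,f₂) = ⟨f₁*θ_l ∧ f₂*θ_r⟩ satisfies the group 2-cocycle identity c(f₁,f₂) + c(f₁f₂, f₃) = c(f₁, f₂f₃) + c(f₂,f₃). -/

import Mathlib

attribute [local instance] Matrix.normedAddCommGroup Matrix.normedSpace
open scoped Manifold

noncomputable instance matrixChartedSpaceSelf (n : ℕ) :
    @ChartedSpace (Matrix (Fin n) (Fin n) ℝ)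
      (PseudoMetricSpace.toUniformSpace : UniformSpace (Matrix (Fin n) (Fin n) ℝ)).toTopologicalSpace
      (Matrix (Fin n) (Fin n) ℝ) instTopologicalSpaceMatrix :=
  @chartedSpaceSelf _
    (PseudoMetricSpace.toUniformSpace : UniformSpace (Matrix (Fin n) (Fin n) ℝ)).toTopologicalSpace

noncomputable instance matrixProdChartedSpaceSelf (n : ℕ) :
    @ChartedSpace (Matrix (Fin n) (Fin n) ℝ × Matrix (Fin n) (Fin n) ℝ)
      (PseudoMetricSpace.toUniformSpace :
        UniformSpace (Matrix (Fin n) (Fin n) ℝ × Matrix (Fin n) (Fin n) ℝ)).toTopologicalSpace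
      (Matrix (Fin n) (Fin n) ℝ × Matrix (Fin n) (Fin n) ℝ) instTopologicalSpaceProd :=
  @chartedSpaceSelf _
    (PseudoMetricSpace.toUniformSpace :
      UniformSpace (Matrix (Fin n) (Fin n) ℝ × Matrix (Fin n) (Fin n) ℝ)).toTopologicalSpace

section
variable {n : ℕ}
variable {EM : Type*} [NormedAddCommGroup EM] [NormedSpace ℝ EM]
  {HM : Type*} [TopologicalSpace HM] (I : ModelWithCorners ℝ EM HM)
  {M : Type*} [TopologicalSpace M] [ChartedSpace HM M]

/-- The differential of `f : M → gl(n,ℝ)` at `x` in direction `u`. -/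
noncomputable def mdiff (f : M → Matrix (Fin n) (Fin n) ℝ) (x : M)
    (u : TangentSpace I x) : Matrix (Fin n) (Fin n) ℝ :=
  mfderiv I 𝓘(ℝ, Matrix (Fin n) (Fin n) ℝ) f x u

/-- Matrix multiplication as a continuous bilinear map. -/
noncomputable def matMulCLM :
    Matrix (Fin n) (Fin n) ℝ →L[ℝ] Matrix (Fin n) (Fin n) ℝ →L[ℝ] Matrix (Fin n) (Fin n) ℝ :=
  LinearMap.toContinuousLinearMap
    { toFun := fun a => LinearMap.toContinuousLinearMap (LinearMap.mul ℝ _ a)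
      map_add' := by intro a b; ext c; simp [add_mul]
      map_smul' := by intro r a; ext c; simp }

@[simp] theorem matMulCLM_apply (a b : Matrix (Fin n) (Fin n) ℝ) :
    matMulCLM a b = a * b := rfl

/-- Leibniz rule for `mdiff`. -/
theorem mdiff_mul
    (f g : M → Matrix (Fin n) (Fin n) ℝ) (x : M)
    (hf : MDifferentiableAt I 𝓘(ℝ, Matrix (Fin n) (Fin n) ℝ) f x)
    (hg : MDifferentiableAt I 𝓘(ℝ, Matrix (Fin n) (Fin n) ℝ) g x)
    (u : TangentSpace I x) :
    mdiff I (fun y => f y * g y) x u =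
      mdiff I f x u * g x + f x * mdiff I g x u := by
  have hbil : IsBoundedBilinearMap ℝ
      (fun p : Matrix (Fin n) (Fin n) ℝ × Matrix (Fin n) (Fin n) ℝ => p.1 * p.2) := by
    have := (matMulCLM (n := n)).isBoundedBilinearMap
    exact this
  have hpair : HasMFDerivAt I
      𝓘(ℝ, Matrix (Fin n) (Fin n) ℝ × Matrix (Fin n) (Fin n) ℝ)
      (fun y => (f y, g y)) x
      ((mfderiv I 𝓘(ℝ, Matrix (Fin n) (Fin n) ℝ) f x).prod
        (mfderiv I 𝓘(ℝ, Matrix (Fin n) (Fin n) ℝ) g x)) := by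
    have hp := (hf.prodMk hg).hasMFDerivAt
    rw [hf.mfderiv_prod hg] at hp
    exact hp
  have hmul := (hbil.hasFDerivAt (f x, g x)).hasMFDerivAt
  have hcomp := hmul.comp x hpair
  have := hcomp.mfderiv
  unfold mdiff
  have heq : (fun y => f y * g y) =
      ((fun p : Matrix (Fin n) (Fin n) ℝ × Matrix (Fin n) (Fin n) ℝ => p.1 * p.2) ∘
        fun y => (f y, g y)) := rfl
  rw [heq]
  exact (congrArg (fun L => L u) this).trans ((hbil.deriv_apply _ _).trans (add_comm _ _))

/-- The 2-form cocycle `c(f₁,f₂) = ⟨f₁*θ_l ∧ f₂*θ_r⟩` on a smooth manifold `M`,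
where `θ_l = g⁻¹ dg`, `θ_r = dg g⁻¹` are the Maurer–Cartan forms, evaluated at
`x : M` on tangent vectors `u v`:
`c(f₁,f₂)_x(u,v) = ⟨f₁(x)⁻¹ df₁(u), df₂(v) f₂(x)⁻¹⟩ − (u ↔ v)`. -/
noncomputable def mcCocycle
    (B : Matrix (Fin n) (Fin n) ℝ →ₗ[ℝ] Matrix (Fin n) (Fin n) ℝ →ₗ[ℝ] ℝ)
    (f₁ f₂ : M → Matrix (Fin n) (Fin n) ℝ) (x : M) (u v : TangentSpace I x) : ℝ :=
  B ((f₁ x)⁻¹ * mdiff I f₁ x u)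
      (mdiff I f₂ x v * (f₂ x)⁻¹) -
    B ((f₁ x)⁻¹ * mdiff I f₁ x v)
      (mdiff I f₂ x u * (f₂ x)⁻¹)

/-- for a Lie group `G ⊆ GL(n,ℝ)` with Ad-invariant inner
product `B` on its Lie algebra (of matrices) and smooth maps
`f₁ f₂ f₃ : M → G`, the cocycle `c(f₁,f₂) = ⟨f₁*θ_l ∧ f₂*θ_r⟩` satisfies the
group 2-cocycle identity
`c(f₁,f₂) + c(f₁f₂,f₃) = c(f₁,f₂f₃) + c(f₂,f₃)`. -/
theorem mcCocycle_identity
    [IsManifold I (⊤ : ℕ∞) M]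
    (G : Subgroup (Matrix (Fin n) (Fin n) ℝ)ˣ)
    (B : Matrix (Fin n) (Fin n) ℝ →ₗ[ℝ] Matrix (Fin n) (Fin n) ℝ →ₗ[ℝ] ℝ)
    (hBsymm : ∀ a b, B a b = B b a)
    (hBinv : ∀ g ∈ G, ∀ a b,
      B ((g : Matrix (Fin n) (Fin n) ℝ) * a * ((g⁻¹ : (Matrix (Fin n) (Fin n) ℝ)ˣ) : Matrix (Fin n) (Fin n) ℝ))
        ((g : Matrix (Fin n) (Fin n) ℝ) * b * ((g⁻¹ : (Matrix (Fin n) (Fin n) ℝ)ˣ) : Matrix (Fin n) (Fin n) ℝ)) = B a b)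
    (f₁ f₂ f₃ : M → Matrix (Fin n) (Fin n) ℝ)
    (hf₁ : ContMDiff I 𝓘(ℝ, Matrix (Fin n) (Fin n) ℝ) (⊤ : ℕ∞) f₁)
    (hf₂ : ContMDiff I 𝓘(ℝ, Matrix (Fin n) (Fin n) ℝ) (⊤ : ℕ∞) f₂)
    (hf₃ : ContMDiff I 𝓘(ℝ, Matrix (Fin n) (Fin n) ℝ) (⊤ : ℕ∞) f₃)
    (hf₁G : ∀ x, ∃ g ∈ G, f₁ x = (g : Matrix (Fin n) (Fin n) ℝ))
    (hf₂G : ∀ x, ∃ g ∈ G, f₂ x = (g : Matrix (Fin n) (Fin n) ℝ))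
    (hf₃G : ∀ x, ∃ g ∈ G, f₃ x = (g : Matrix (Fin n) (Fin n) ℝ)) :
    ∀ (x : M) (u v : TangentSpace I x),
      mcCocycle I B f₁ f₂ x u v +
        mcCocycle I B (fun y => f₁ y * f₂ y) f₃ x u v =
      mcCocycle I B f₁ (fun y => f₂ y * f₃ y) x u v +
        mcCocycle I B f₂ f₃ x u v := by
  intro x u v
  obtain ⟨g₁, hg₁, e₁⟩ := hf₁G x
  obtain ⟨g₂, hg₂, e₂⟩ := hf₂G x
  obtain ⟨g₃, hg₃, e₃⟩ := hf₃G x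
  have hd₁ := (hf₁ x).mdifferentiableAt (by simp)
  have hd₂ := (hf₂ x).mdifferentiableAt (by simp)
  have hd₃ := (hf₃ x).mdifferentiableAt (by simp)
  -- invertibility facts
  have ha : (f₁ x)⁻¹ * f₁ x = 1 := by
    rw [e₁, ← Matrix.coe_units_inv, ← Units.val_mul, inv_mul_cancel, Units.val_one]
  have hc : f₃ x * (f₃ x)⁻¹ = 1 := by
    rw [e₃, ← Matrix.coe_units_inv, ← Units.val_mul, mul_inv_cancel, Units.val_one]
  -- conjugation invariance by f₂ x
  have hXsimp : ∀ X : Matrix (Fin n) (Fin n) ℝ,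
      (g₂ : Matrix (Fin n) (Fin n) ℝ) * ((g₂⁻¹ : (Matrix (Fin n) (Fin n) ℝ)ˣ) * X * g₂) *
        (g₂⁻¹ : (Matrix (Fin n) (Fin n) ℝ)ˣ) = X := by
    intro X
    have hstep : (g₂ : Matrix (Fin n) (Fin n) ℝ) *
        ((g₂⁻¹ : (Matrix (Fin n) (Fin n) ℝ)ˣ) * X * g₂) * (g₂⁻¹ : (Matrix (Fin n) (Fin n) ℝ)ˣ)
        = ((g₂ : Matrix (Fin n) (Fin n) ℝ) * (g₂⁻¹ : (Matrix (Fin n) (Fin n) ℝ)ˣ)) * X *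
          ((g₂ : Matrix (Fin n) (Fin n) ℝ) * (g₂⁻¹ : (Matrix (Fin n) (Fin n) ℝ)ˣ)) := by
      noncomm_ring
    rw [hstep, ← Units.val_mul, mul_inv_cancel, Units.val_one, one_mul, mul_one]
  have hconj : ∀ X Y, B ((f₂ x)⁻¹ * X * f₂ x) Y = B X (f₂ x * Y * (f₂ x)⁻¹) := by
    intro X Y
    rw [e₂, ← Matrix.coe_units_inv]
    have h := hBinv g₂ hg₂ ((g₂⁻¹ : (Matrix (Fin n) (Fin n) ℝ)ˣ) * X * g₂) Y
    rw [hXsimp X] at h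
    exact h.symm
  -- Leibniz rules
  have h12u := mdiff_mul I f₁ f₂ x hd₁ hd₂ u
  have h12v := mdiff_mul I f₁ f₂ x hd₁ hd₂ v
  have h23u := mdiff_mul I f₂ f₃ x hd₂ hd₃ u
  have h23v := mdiff_mul I f₂ f₃ x hd₂ hd₃ v
  -- algebraic rearrangements
  have t1 : ∀ P Q : Matrix (Fin n) (Fin n) ℝ,
      (f₁ x * f₂ x)⁻¹ * (P * f₂ x + f₁ x * Q) =
        (f₂ x)⁻¹ * ((f₁ x)⁻¹ * P) * f₂ x + (f₂ x)⁻¹ * Q := by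
    intro P Q
    rw [Matrix.mul_inv_rev, mul_add]
    congr 1
    · noncomm_ring
    · have hstep : (f₂ x)⁻¹ * (f₁ x)⁻¹ * (f₁ x * Q)
          = (f₂ x)⁻¹ * (((f₁ x)⁻¹ * f₁ x) * Q) := by noncomm_ring
      rw [hstep, ha, one_mul]
  have t2 : ∀ Q R : Matrix (Fin n) (Fin n) ℝ,
      (Q * f₃ x + f₂ x * R) * (f₂ x * f₃ x)⁻¹ =
        Q * (f₂ x)⁻¹ + f₂ x * (R * (f₃ x)⁻¹) * (f₂ x)⁻¹ := by
    intro Q R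
    rw [Matrix.mul_inv_rev, add_mul]
    congr 1
    · have hstep : Q * f₃ x * ((f₃ x)⁻¹ * (f₂ x)⁻¹)
          = Q * ((f₃ x * (f₃ x)⁻¹) * (f₂ x)⁻¹) := by noncomm_ring
      rw [hstep, hc, one_mul]
    · noncomm_ring
  simp only [mcCocycle]
  rw [h12u, h12v, h23u, h23v, t1, t1, t2, t2]
  simp only [map_add, LinearMap.add_apply]
  rw [hconj, hconj]
  ring
end
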